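/- Let P and Q be probability measures on a measurable space X, let ε ≥ 0 and δ ∈ [0,1], and define f_{ε,δ}(α) = max{0, 1 − δ − e^ε·α, e^{−ε}·(1 − δ − α)} for α ∈ [0,1]. Then P and Q are (ε,δ)-indistinguishable (i.e. for all measurable sets S ⊆ X, P(S) ≤ e^ε·Q(S) + δ and Q(S) ≤ e^ε·P(S) + δ) if and only if for every measurable rejection rule φ : X → [0,1], the type II error β_φ = 1 − ∫ φ dQ satisfies β_φ ≥ f_{ε,δ}(α_φ), where α_φ = ∫ φ dP is the type I error. -/

import Mathlib

open MeasureTheory Set ENNReal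

lemma fn_integrable {X : Type*} [MeasurableSpace X] (μ : Measure X) [IsProbabilityMeasure μ]
    (φ : X → ℝ) (hm : Measurable φ) (hb : ∀ x, φ x ∈ Set.Icc (0:ℝ) 1) :
    Integrable φ μ := by
  refine Integrable.mono' (integrable_const 1) hm.aestronglyMeasurable ?_
  refine ae_of_all _ fun x => ?_
  rw [Real.norm_eq_abs, abs_of_nonneg (hb x).1]
  exact (hb x).2

lemma key_ineq {X : Type*} [MeasurableSpace X]
    (P Q : Measure X) [IsProbabilityMeasure P] [IsProbabilityMeasure Q]
    (ε δ : ℝ)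
    (h : ∀ S : Set X, MeasurableSet S → (Q S).toReal ≤ Real.exp ε * (P S).toReal + δ)
    (φ : X → ℝ) (hm : Measurable φ) (hb : ∀ x, φ x ∈ Set.Icc (0:ℝ) 1) :
    ∫ x, φ x ∂Q ≤ Real.exp ε * ∫ x, φ x ∂P + δ := by
  have hnnP : 0 ≤ᵐ[P] φ := ae_of_all _ fun x => (hb x).1
  have hnnQ : 0 ≤ᵐ[Q] φ := ae_of_all _ fun x => (hb x).1
  have hbdP : φ ≤ᵐ[P] fun _ => (1:ℝ) := ae_of_all _ fun x => (hb x).2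
  have hbdQ : φ ≤ᵐ[Q] fun _ => (1:ℝ) := ae_of_all _ fun x => (hb x).2
  have hiP := fn_integrable P φ hm hb
  have hiQ := fn_integrable Q φ hm hb
  rw [hiQ.integral_eq_integral_Ioc_meas_le hnnQ hbdQ,
      hiP.integral_eq_integral_Ioc_meas_le hnnP hbdP]
  have measg : ∀ (μ : Measure X), Measurable (fun t : ℝ => (μ {x | t ≤ φ x}).toReal) := by
    intro μ
    have ha : Antitone (fun t : ℝ => μ {x | t ≤ φ x}) :=
      fun s t hst => measure_mono (fun x hx => le_trans hst hx)
    exact ha.measurable.ennreal_toReal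
  have intg : ∀ (μ : Measure X) [IsProbabilityMeasure μ],
      IntegrableOn (fun t : ℝ => (μ {x | t ≤ φ x}).toReal) (Ioc 0 1) := by
    intro μ _
    refine Integrable.mono' (g := fun _ => (1:ℝ)) (integrableOn_const (by simp) (by simp))
      (measg μ).aestronglyMeasurable.restrict (ae_of_all _ fun t => ?_)
    rw [Real.norm_eq_abs, abs_of_nonneg ENNReal.toReal_nonneg]
    calc (μ {x | t ≤ φ x}).toReal ≤ (1:ℝ≥0∞).toReal :=
          ENNReal.toReal_mono ENNReal.one_ne_top prob_le_one
      _ = 1 := ENNReal.toReal_one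
  have step : ∫ t in Ioc (0:ℝ) 1, (Q {x | t ≤ φ x}).toReal
      ≤ ∫ t in Ioc (0:ℝ) 1, (Real.exp ε * (P {x | t ≤ φ x}).toReal + δ) := by
    refine setIntegral_mono_on (intg Q) ?_ measurableSet_Ioc (fun t _ => ?_)
    · exact ((intg P).const_mul _).add (integrableOn_const (by simp) (by simp))
    · exact h _ (measurableSet_le measurable_const hm)
  refine step.trans (le_of_eq ?_)
  rw [integral_add ((intg P).const_mul _) (integrableOn_const (by simp) (by simp)),
      integral_const_mul, setIntegral_const]
  simp only [measureReal_def]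
  simp [Real.volume_Ioc]

/-- **(ε,δ)-DP is equivalent to domination by the trade-off function `f_{ε,δ}`.**
P and Q are (ε,δ)-indistinguishable iff every measurable rejection rule
φ : X → [0,1] has type II error β_φ = 1 − ∫ φ dQ at least
f_{ε,δ}(α_φ) = max{0, 1 − δ − e^ε·α_φ, e^{−ε}(1 − δ − α_φ)}, where α_φ = ∫ φ dP. -/
theorem dp_iff_tradeoff {X : Type*} [MeasurableSpace X]
    (P Q : Measure X) [IsProbabilityMeasure P] [IsProbabilityMeasure Q]
    (ε δ : ℝ) (hε : 0 ≤ ε) (hδ0 : 0 ≤ δ) (hδ1 : δ ≤ 1) :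
    (∀ S : Set X, MeasurableSet S →
        (P S).toReal ≤ Real.exp ε * (Q S).toReal + δ ∧
        (Q S).toReal ≤ Real.exp ε * (P S).toReal + δ) ↔
    (∀ φ : X → ℝ, Measurable φ → (∀ x, φ x ∈ Set.Icc (0 : ℝ) 1) →
      max 0 (max (1 - δ - Real.exp ε * ∫ x, φ x ∂P)
          (Real.exp (-ε) * (1 - δ - ∫ x, φ x ∂P)))
        ≤ 1 - ∫ x, φ x ∂Q) := by
  constructor
  · intro hDP φ hm hb
    have hiP := fn_integrable P φ hm hb
    have hiQ := fn_integrable Q φ hm hb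
    have h1 : ∫ x, φ x ∂Q ≤ 1 := by
      calc ∫ x, φ x ∂Q ≤ ∫ _, (1:ℝ) ∂Q :=
            integral_mono hiQ (integrable_const 1) (fun x => (hb x).2)
        _ = 1 := by simp
    have h2 : ∫ x, φ x ∂Q ≤ Real.exp ε * ∫ x, φ x ∂P + δ :=
      key_ineq P Q ε δ (fun S hS => (hDP S hS).2) φ hm hb
    -- apply key_ineq with roles swapped to ψ = 1 - φ
    have hψb : ∀ x, (1 - φ x) ∈ Set.Icc (0:ℝ) 1 := by
      intro x; constructor <;> [linarith [(hb x).2]; linarith [(hb x).1]]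
    have h3 : ∫ x, (1 - φ x) ∂P ≤ Real.exp ε * ∫ x, (1 - φ x) ∂Q + δ :=
      key_ineq Q P ε δ (fun S hS => (hDP S hS).1) _ (measurable_const.sub hm) hψb
    rw [integral_sub (integrable_const 1) hiP, integral_sub (integrable_const 1) hiQ] at h3
    simp only [integral_const, measure_univ, ENNReal.toReal_one, one_smul, probReal_univ, smul_eq_mul, one_mul] at h3
    have hexp : Real.exp (-ε) * Real.exp ε = 1 := by
      rw [← Real.exp_add]; simp
    have hexppos := Real.exp_pos (-ε)
    refine max_le ?_ (max_le ?_ ?_)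
    · linarith
    · linarith
    · have h5 : 1 - δ - ∫ x, φ x ∂P ≤ Real.exp ε * (1 - ∫ x, φ x ∂Q) := by linarith
      have h6 := mul_le_mul_of_nonneg_left h5 hexppos.le
      have h7 : Real.exp (-ε) * (Real.exp ε * (1 - ∫ x, φ x ∂Q)) = 1 - ∫ x, φ x ∂Q := by
        rw [← mul_assoc, hexp, one_mul]
      linarith
  · intro h S hS
    have hSc := hS.compl
    -- indicator of a measurable set as a rejection rule
    have ind : ∀ T : Set X, MeasurableSet T →
        Measurable (T.indicator (fun _ => (1:ℝ))) ∧
        (∀ x, T.indicator (fun _ => (1:ℝ)) x ∈ Set.Icc (0:ℝ) 1) ∧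
        (∀ (μ : Measure X), ∫ x, T.indicator (fun _ => (1:ℝ)) x ∂μ = (μ T).toReal) := by
      intro T hT
      refine ⟨measurable_const.indicator hT, fun x => ?_, fun μ => ?_⟩
      · by_cases hx : x ∈ T <;> simp [hx]
      · simp [integral_indicator hT, measureReal_def]
    obtain ⟨m1, b1, i1⟩ := ind S hS
    obtain ⟨m2, b2, i2⟩ := ind Sᶜ hSc
    have hQc : (Q Sᶜ).toReal = 1 - (Q S).toReal := by
      rw [prob_compl_eq_one_sub hS, ENNReal.toReal_sub_of_le prob_le_one ENNReal.one_ne_top,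
        ENNReal.toReal_one]
    have hPc : (P Sᶜ).toReal = 1 - (P S).toReal := by
      rw [prob_compl_eq_one_sub hS, ENNReal.toReal_sub_of_le prob_le_one ENNReal.one_ne_top,
        ENNReal.toReal_one]
    constructor
    · -- use φ = indicator Sᶜ, third branch
      have := h _ m2 b2
      rw [i2 P, i2 Q, hPc, hQc] at this
      have h3 := le_trans (le_max_right _ _) (le_trans (le_max_right _ _) this)
      have hexp : Real.exp (-ε) * Real.exp ε = 1 := by rw [← Real.exp_add]; simp
      have h6 := mul_le_mul_of_nonneg_left h3 (Real.exp_pos ε).le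
      have h7 : Real.exp ε * (Real.exp (-ε) * (1 - δ - (1 - (P S).toReal)))
          = 1 - δ - (1 - (P S).toReal) := by
        rw [← mul_assoc, mul_comm (Real.exp ε), hexp, one_mul]
      linarith
    · -- use φ = indicator S, second branch
      have := h _ m1 b1
      rw [i1 P, i1 Q] at this
      have h2 := le_trans (le_max_left _ _) (le_trans (le_max_right _ _) this)
      linarith
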